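/- Let G be a countable group, V ⊆ G, and suppose that for every unitary representation U of G on a Hilbert space H and every ε > 0, there exists a finitely supported family (c_g) with support in V ∪ V^{-1}, ∑_g c_g = 1, such that P = ∑_g c_g U_g satisfies P = P* and P + ε·Id is a positive operator. Then for every unitary representation π of G and every ξ ∈ H_π with ⟨π(v)ξ, ξ⟩ = 0 for all v ∈ V, the vector ξ is orthogonal to the subspace of π(G)-invariant vectors. -/

import Mathlib

open scoped ComplexOrder

/-- If for every unitary representation `U` and every `ε > 0` there is a finitely supported
family `(c_g)` supported in `V ∪ V⁻¹` with `∑ c_g = 1` such that `P = ∑ c_g U_g` is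
self-adjoint with `P + ε·Id` positive, then every vector `ξ` with vanishing correlations
`⟨π(v)ξ, ξ⟩ = 0` on `V` is orthogonal to the `π(G)`-invariant vectors. -/
theorem positive_operator_witness_implies_opRecurrence (G : Type) [Group G] [Countable G]
    (V : Set G)
    (hyp : ∀ (H : Type) (_ : NormedAddCommGroup H) (_ : InnerProductSpace ℂ H)
      (_ : CompleteSpace H),
      ∀ (U : G →* (H ≃ₗᵢ[ℂ] H)) (ε : ℝ), 0 < ε → ∃ c : G → ℂ,
        (Function.support c).Finite ∧
        Function.support c ⊆ V ∪ V⁻¹ ∧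
        ∑ᶠ g : G, c g = 1 ∧
        -- `P = ∑ c_g U_g` is self-adjoint: `⟨P x, y⟩ = ⟨x, P y⟩`
        (∀ x y : H, (inner ℂ (∑ᶠ g : G, c g • (U g) x) y : ℂ) =
          inner ℂ x (∑ᶠ g : G, c g • (U g) y)) ∧
        -- `P + ε` is a positive operator
        (∀ x : H, 0 ≤ (inner ℂ (∑ᶠ g : G, c g • (U g) x) x : ℂ) + (ε : ℂ) * (inner ℂ x x : ℂ))) :
    ∀ (H : Type) (_ : NormedAddCommGroup H) (_ : InnerProductSpace ℂ H) (_ : CompleteSpace H),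
      ∀ (π : G →* (H ≃ₗᵢ[ℂ] H)) (ξ : H),
        (∀ v ∈ V, (inner ℂ ((π v) ξ) ξ : ℂ) = 0) →
        ∀ η : H, (∀ g : G, (π g) η = η) → (inner ℂ ξ η : ℂ) = 0 := by
  intro H i1 i2 i3 π ξ hV η hη
  by_cases hη0 : η = 0
  · simp [hη0]
  have hNpos : (0:ℝ) < ‖η‖ ^ 2 := pow_pos (norm_pos_iff.mpr hη0) 2
  set N : ℝ := ‖η‖ ^ 2 with hN
  set b : ℂ := (inner ℂ ξ η : ℂ) with hbdef
  -- correlations vanish on all of V ∪ V⁻¹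
  have hcorr : ∀ g : G, g ∈ V ∪ V⁻¹ → (inner ℂ ((π g) ξ) ξ : ℂ) = 0 := by
    intro g hg
    rcases hg with hg | hg
    · exact hV g hg
    · have hv : (inner ℂ ((π g⁻¹) ξ) ξ : ℂ) = 0 := hV g⁻¹ hg
      have h1 : (π g⁻¹) ((π g) ξ) = ξ := by
        have hm : π g⁻¹ * π g = 1 := by rw [← map_mul, inv_mul_cancel, map_one]
        calc (π g⁻¹) ((π g) ξ) = (π g⁻¹ * π g) ξ := rfl
          _ = ξ := by rw [hm]; rfl
      calc (inner ℂ ((π g) ξ) ξ : ℂ)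
          = (inner ℂ ((π g⁻¹) ((π g) ξ)) ((π g⁻¹) ξ) : ℂ) :=
            ((π g⁻¹).inner_map_map _ _).symm
        _ = (inner ℂ ξ ((π g⁻¹) ξ) : ℂ) := by rw [h1]
        _ = starRingEnd ℂ (inner ℂ ((π g⁻¹) ξ) ξ : ℂ) := (inner_conj_symm _ _).symm
        _ = 0 := by rw [hv]; simp
  -- the main estimate, for each ε > 0
  have hmain : ∀ ε : ℝ, 0 < ε → N * ‖b‖ ^ 2 ≤ ε * (N ^ 2 * ‖ξ‖ ^ 2) := by
    intro ε hε
    obtain ⟨c, hfin, hsupp, hsum, hsa, hpos⟩ := hyp H i1 i2 i3 π ε hε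
    set s : Finset G := hfin.toFinset with hs
    have hsub : Function.support c ⊆ ↑s := by rw [hs, Set.Finite.coe_toFinset]
    have hfs : ∀ x : H, (∑ᶠ g : G, c g • (π g) x) = ∑ g ∈ s, c g • (π g) x := by
      intro x
      refine finsum_eq_sum_of_support_subset _ ?_
      refine subset_trans ?_ hsub
      intro g hg
      simp only [Function.mem_support] at *
      intro h0; apply hg; rw [h0, zero_smul]
    have hsumc : ∑ g ∈ s, c g = 1 := by
      rw [← hsum]; exact (finsum_eq_sum_of_support_subset _ hsub).symm
    have hPη : (∑ᶠ g : G, c g • (π g) η) = η := by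
      rw [hfs]
      calc ∑ g ∈ s, c g • (π g) η = ∑ g ∈ s, c g • η :=
            Finset.sum_congr rfl fun g _ => by rw [hη g]
        _ = (∑ g ∈ s, c g) • η := (Finset.sum_smul).symm
        _ = η := by rw [hsumc, one_smul]
    have hPξξ : (inner ℂ (∑ᶠ g : G, c g • (π g) ξ) ξ : ℂ) = 0 := by
      rw [hfs, sum_inner]
      refine Finset.sum_eq_zero fun g hg => ?_
      have hgV : g ∈ V ∪ V⁻¹ := hsupp (by
        rw [hs] at hg
        exact (Set.Finite.mem_toFinset _).mp hg)
      rw [inner_smul_left, hcorr g hgV, mul_zero]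
    have hPξη : (inner ℂ (∑ᶠ g : G, c g • (π g) ξ) η : ℂ) = b := by
      rw [hsa ξ η, hPη]
    have hηξ : (inner ℂ η ξ : ℂ) = starRingEnd ℂ b := by
      rw [hbdef, inner_conj_symm]
    -- the test vector
    set x : H := (N : ℂ) • ξ + (-(starRingEnd ℂ b)) • η with hx
    have hPx : (∑ᶠ g : G, c g • (π g) x) =
        (N : ℂ) • (∑ᶠ g : G, c g • (π g) ξ) + (-(starRingEnd ℂ b)) • η := by
      rw [hfs]
      calc ∑ g ∈ s, c g • (π g) x
          = ∑ g ∈ s, ((N : ℂ) • (c g • (π g) ξ) + (c g * (-(starRingEnd ℂ b))) • η) := by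
            refine Finset.sum_congr rfl fun g _ => ?_
            rw [hx, map_add, map_smul, map_smul, hη g]
            module
        _ = (N : ℂ) • (∑ g ∈ s, c g • (π g) ξ)
            + ((∑ g ∈ s, c g) * (-(starRingEnd ℂ b))) • η := by
            rw [Finset.sum_add_distrib, Finset.smul_sum, ← Finset.sum_smul, Finset.sum_mul]
        _ = _ := by rw [hsumc, one_mul, hfs ξ]
    have hposx := hpos x
    have hbb : b * starRingEnd ℂ b = ((‖b‖ : ℂ)) ^ 2 := by
      rw [Complex.mul_conj, Complex.normSq_eq_norm_sq]
      push_cast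
      ring
    have hξξ : (inner ℂ ξ ξ : ℂ) = ((‖ξ‖ : ℂ)) ^ 2 := inner_self_eq_norm_sq_to_K ξ
    have hηη : (inner ℂ η η : ℂ) = ((‖η‖ : ℂ)) ^ 2 := inner_self_eq_norm_sq_to_K η
    have key : (inner ℂ (∑ᶠ g : G, c g • (π g) x) x : ℂ) + (ε : ℂ) * (inner ℂ x x : ℂ)
        = (((1 + ε) * (-(N * ‖b‖ ^ 2)) + ε * (N ^ 2 * ‖ξ‖ ^ 2)) : ℝ) := by
      rw [hPx, hx]
      simp only [inner_add_left, inner_add_right, inner_smul_left, inner_smul_right,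
        hPξξ, hPξη, hηξ, hξξ, hηη, ← hbdef, map_neg, Complex.conj_conj,
        Complex.conj_ofReal]
      rw [hN]
      push_cast
      linear_combination (-(1 + (ε : ℂ)) * ((‖η‖ : ℂ)) ^ 2) * hbb
    rw [key] at hposx
    have hre : (0:ℝ) ≤ (1 + ε) * (-(N * ‖b‖ ^ 2)) + ε * (N ^ 2 * ‖ξ‖ ^ 2) :=
      Complex.zero_le_real.mp hposx
    nlinarith [norm_nonneg b, sq_nonneg (‖b‖), hNpos, hε,
      mul_nonneg hNpos.le (sq_nonneg ‖b‖)]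
  -- conclude: ‖b‖² ≤ 0, hence b = 0
  set C : ℝ := N * ‖ξ‖ ^ 2 with hC
  have hC0 : (0:ℝ) ≤ C := by positivity
  have hBle : ‖b‖ ^ 2 ≤ 0 := by
    refine le_of_forall_pos_le_add fun δ hδ => ?_
    rw [zero_add]
    have hεp : 0 < δ / (C + 1) := by positivity
    have h3 := hmain (δ / (C + 1)) hεp
    have heq : (δ / (C + 1)) * (N ^ 2 * ‖ξ‖ ^ 2) = N * ((δ / (C + 1)) * C) := by
      rw [hC]; ring
    have h4 : ‖b‖ ^ 2 ≤ (δ / (C + 1)) * C := by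
      refine le_of_mul_le_mul_left ?_ hNpos
      calc N * ‖b‖ ^ 2 ≤ (δ / (C + 1)) * (N ^ 2 * ‖ξ‖ ^ 2) := h3
        _ = N * ((δ / (C + 1)) * C) := heq
    have h5 : (δ / (C + 1)) * C ≤ (δ / (C + 1)) * (C + 1) :=
      mul_le_mul_of_nonneg_left (by linarith) hεp.le
    have h6 : (δ / (C + 1)) * (C + 1) = δ :=
      div_mul_cancel₀ δ (by linarith)
    linarith
  have hb0 : b = 0 := by
    have : ‖b‖ = 0 := by nlinarith [norm_nonneg b]
    exact norm_eq_zero.mp this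
  exact hb0
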